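/- Let K ≥ 2 be an integer and ε > 0 with ε ≤ 1/K, and let p_1, p_2, ... be independent identically distributed random vectors with values in the set Δ_ε = {q ∈ [ε, 1]^K : ∑_{k=1}^K q_k = 1}. Fix a temperature τ > 0 and define the tempered correct-class probability p_i*(τ) = (p_{i,1})^{1/τ} / ∑_{k=1}^K (p_{i,k})^{1/τ} (the first class is the correct one). Then: (a) for every i, p_i*(τ) ∈ [ε', 1] where ε' = ε^{1/τ}/K > 0; and (b) with μ(τ) = E[p_1*(τ)] and σ(τ)² = Var(p_1*(τ)), the tempered ensemble NLL satisfies E[−log((1/n)·∑_{i=1}^n p_i*(τ))] = −log μ(τ) + (σ(τ)²/(2·μ(τ)²))·(1/n) + O(1/n²) as n → ∞, where the coefficient σ(τ)²/(2·μ(τ)²) of 1/n is nonnegative. -/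

import Mathlib

open MeasureTheory ProbabilityTheory

lemma bdd_int' {Ω : Type*} [MeasurableSpace Ω] (P : Measure Ω) [IsFiniteMeasure P]
    (f : Ω → ℝ) (hf : Measurable f) (C : ℝ) (h : ∀ ω, |f ω| ≤ C) : Integrable f P :=
  (integrable_const C).mono' hf.aestronglyMeasurable (ae_of_all _ h)

lemma log_taylor' {c x : ℝ} (hc : 0 < c) (hc1 : c ≤ 1) (hx : c ≤ x) :
    |Real.log x - ((x-1) - (x-1)^2/2 + (x-1)^3/3)| ≤ (x-1)^4 / c := by
  set g : ℝ → ℝ := fun t => Real.log t - ((t-1) - (t-1)^2/2 + (t-1)^3/3) with hg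
  have hder : ∀ t ∈ Set.uIcc 1 x, HasDerivWithinAt g (-(t-1)^3/t) (Set.uIcc 1 x) t := by
    intro t ht
    have htpos : 0 < t := by
      rcases Set.mem_uIcc.1 ht with h | h
      · linarith [h.1]
      · linarith [h.1]
    have h1 : HasDerivAt g (t⁻¹ - (1 - 2*(t-1)/2 + 3*(t-1)^2/3)) t := by
      have := (Real.hasDerivAt_log (ne_of_gt htpos)).sub
        (((hasDerivAt_id t).sub_const 1).sub
          ((((hasDerivAt_id t).sub_const 1).pow 2).div_const 2) |>.add
          ((((hasDerivAt_id t).sub_const 1).pow 3).div_const 3))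
      convert this using 1
      · rfl
      · rfl
      · rfl
      simp only [id]
      ring
    have heq : t⁻¹ - (1 - 2*(t-1)/2 + 3*(t-1)^2/3) = -(t-1)^3/t := by
      field_simp
      ring
    rw [heq] at h1
    exact h1.hasDerivWithinAt
  have hbound : ∀ t ∈ Set.uIcc 1 x, ‖-(t-1)^3/t‖ ≤ |x-1|^3 / c := by
    intro t ht
    have htc : c ≤ t := by
      rcases Set.mem_uIcc.1 ht with h | h
      · linarith [h.1]
      · linarith [h.1]
    have ht1 : |t - 1| ≤ |x - 1| := by
      rcases Set.mem_uIcc.1 ht with h | h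
      · rw [abs_of_nonneg (by linarith [h.1]), abs_of_nonneg (by linarith [h.2])]; linarith [h.2]
      · rw [abs_of_nonpos (by linarith [h.2]), abs_of_nonpos (by linarith [h.1])]; linarith [h.1]
    have : ‖-(t-1)^3/t‖ = |t-1|^3 / t := by
      rw [norm_div, norm_neg, Real.norm_eq_abs, Real.norm_eq_abs, abs_pow,
        abs_of_pos (lt_of_lt_of_le hc htc)]
    rw [this]
    apply div_le_div₀ (by positivity) (pow_le_pow_left₀ (abs_nonneg _) ht1 3) hc htc
  have key := (convex_uIcc (1:ℝ) x).norm_image_sub_le_of_norm_hasDerivWithin_le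
    hder hbound (Set.left_mem_uIcc) (Set.right_mem_uIcc)
  have hg1 : g 1 = 0 := by simp [hg]
  rw [hg1, sub_zero, Real.norm_eq_abs, Real.norm_eq_abs] at key
  calc |g x| ≤ |x-1|^3/c * |x-1| := key
    _ = |x-1|^4 / c := by ring
    _ = (x-1)^4 / c := by rw [← abs_pow, abs_of_nonneg (by positivity : (0:ℝ) ≤ (x-1)^4)]

lemma sum_moments' {Ω : Type*} [MeasurableSpace Ω] (P : Measure Ω) [IsProbabilityMeasure P]
    (Y : ℕ → Ω → ℝ) (hYmeas : ∀ i, Measurable (Y i))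
    (hYindep : iIndepFun Y P)
    (hYident : ∀ i, IdentDistrib (Y i) (Y 0) P P)
    (hYbdd : ∀ i ω, |Y i ω| ≤ 1)
    (hmean : ∫ ω, Y 0 ω ∂P = 0) (n : ℕ) :
    (∫ ω, (∑ i ∈ Finset.range n, Y i ω) ∂P = 0) ∧
    (∫ ω, (∑ i ∈ Finset.range n, Y i ω)^2 ∂P = n * ∫ ω, (Y 0 ω)^2 ∂P) ∧
    (∫ ω, (∑ i ∈ Finset.range n, Y i ω)^3 ∂P = n * ∫ ω, (Y 0 ω)^3 ∂P) ∧
    (∫ ω, (∑ i ∈ Finset.range n, Y i ω)^4 ∂P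
      = n * ∫ ω, (Y 0 ω)^4 ∂P + 3*((n:ℝ)*((n:ℝ)-1))*(∫ ω, (Y 0 ω)^2 ∂P)^2) := by
  set m2 := ∫ ω, (Y 0 ω)^2 ∂P
  set m3 := ∫ ω, (Y 0 ω)^3 ∂P
  set m4 := ∫ ω, (Y 0 ω)^4 ∂P
  have hYb : ∀ (i b : ℕ), ∫ ω, (Y i ω)^b ∂P = ∫ ω, (Y 0 ω)^b ∂P := fun i b =>
    ((hYident i).comp (measurable_id.pow_const b)).integral_eq
  have hYbint : ∀ (i b : ℕ), Integrable (fun ω => (Y i ω)^b) P := by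
    intro i b
    refine bdd_int' P _ ((hYmeas i).pow_const b) 1 fun ω => ?_
    rw [abs_pow]
    exact pow_le_one₀ (abs_nonneg _) (hYbdd i ω)
  have hadd : ∀ (f g : Ω → ℝ), Integrable f P → Integrable g P →
      ∫ ω, f ω + g ω ∂P = (∫ ω, f ω ∂P) + ∫ ω, g ω ∂P := fun f g hf hg => integral_add hf hg
  induction n with
  | zero => simp
  | succ n ih =>
    obtain ⟨ih1, ih2, ih3, ih4⟩ := ih
    set S : Ω → ℝ := fun ω => ∑ i ∈ Finset.range n, Y i ω with hS
    have hSmeas : Measurable S := by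
      apply Finset.measurable_sum
      intro i _; exact hYmeas i
    have hSbd : ∀ ω, |S ω| ≤ n := by
      intro ω
      calc |S ω| ≤ ∑ i ∈ Finset.range n, |Y i ω| := Finset.abs_sum_le_sum_abs _ _
        _ ≤ ∑ i ∈ Finset.range n, 1 := Finset.sum_le_sum fun i _ => hYbdd i ω
        _ = n := by simp
    have hSaint : ∀ a : ℕ, Integrable (fun ω => (S ω)^a) P := by
      intro a
      refine bdd_int' P _ (hSmeas.pow_const a) ((n:ℝ)^a) fun ω => ?_
      rw [abs_pow]
      exact pow_le_pow_left₀ (abs_nonneg _) (hSbd ω) a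
    have hind : IndepFun S (Y n) P := by
      have := hYindep.indepFun_sum_range_succ hYmeas n
      have e : (∑ j ∈ Finset.range n, Y j) = S := by
        funext ω; simp [hS, Finset.sum_apply]
      rwa [e] at this
    have hprodint : ∀ a b : ℕ, Integrable (fun ω => (S ω)^a * (Y n ω)^b) P := by
      intro a b
      refine bdd_int' P _ ((hSmeas.pow_const a).mul ((hYmeas n).pow_const b)) ((n:ℝ)^a) fun ω => ?_
      rw [abs_mul, abs_pow, abs_pow]
      calc |S ω|^a * |Y n ω|^b ≤ (n:ℝ)^a * 1 := by
            apply mul_le_mul (pow_le_pow_left₀ (abs_nonneg _) (hSbd ω) a)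
              (pow_le_one₀ (abs_nonneg _) (hYbdd n ω)) (by positivity) (by positivity)
        _ = (n:ℝ)^a := mul_one _
    have hprod : ∀ a b : ℕ, ∫ ω, (S ω)^a * (Y n ω)^b ∂P
        = (∫ ω, (S ω)^a ∂P) * (∫ ω, (Y 0 ω)^b ∂P) := by
      intro a b
      have h2 := (hind.comp (measurable_id.pow_const a) (measurable_id.pow_const b)).integral_mul_eq_mul_integral
        (hSaint a).aestronglyMeasurable (hYbint n b).aestronglyMeasurable
      have e : ∫ ω, (S ω)^a * (Y n ω)^b ∂P
          = integral P (((fun x : ℝ => id x ^ a) ∘ S) * ((fun x : ℝ => id x ^ b) ∘ Y n)) := rfl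
      rw [e, h2]
      simp only [Function.comp_def, id_eq]
      rw [hYb n b]
    have hsplit : ∀ ω, ∑ i ∈ Finset.range (n+1), Y i ω = S ω + Y n ω := by
      intro ω; rw [Finset.sum_range_succ]
    refine ⟨?_, ?_, ?_, ?_⟩
    · simp_rw [hsplit]
      rw [hadd _ _ (by simpa using hSaint 1) (by simpa using hYbint n 1)]
      have h1 : ∫ ω, Y n ω ∂P = 0 := by simpa [hmean] using hYb n 1
      rw [h1]
      simpa using ih1
    · simp_rw [hsplit]
      have e : ∀ ω, (S ω + Y n ω)^2 = (S ω)^2 + (2 * ((S ω)^1 * (Y n ω)^1) + (Y n ω)^2) := by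
        intro ω; ring
      simp_rw [e]
      rw [hadd (fun ω => S ω^2) (fun ω => 2 * (S ω^1 * Y n ω^1) + Y n ω^2) (hSaint 2)
          (((hprodint 1 1).const_mul 2).add (hYbint n 2)),
        hadd (fun ω => 2 * (S ω^1 * Y n ω^1)) (fun ω => Y n ω^2)
          ((hprodint 1 1).const_mul 2) (hYbint n 2), MeasureTheory.integral_const_mul,
        hprod 1 1, hYb n 2]
      simp only [pow_one] at *
      rw [ih1, ih2]
      push_cast; ring
    · simp_rw [hsplit]
      have e : ∀ ω, (S ω + Y n ω)^3 = (S ω)^3 + (3 * ((S ω)^2 * (Y n ω)^1)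
          + (3 * ((S ω)^1 * (Y n ω)^2) + (Y n ω)^3)) := by intro ω; ring
      simp_rw [e]
      rw [hadd (fun ω => S ω^3) (fun ω => 3 * (S ω^2 * Y n ω^1) + (3 * (S ω^1 * Y n ω^2) + Y n ω^3))
          (hSaint 3) (((hprodint 2 1).const_mul 3).add (((hprodint 1 2).const_mul 3).add (hYbint n 3))),
        hadd (fun ω => 3 * (S ω^2 * Y n ω^1)) (fun ω => 3 * (S ω^1 * Y n ω^2) + Y n ω^3)
          ((hprodint 2 1).const_mul 3) (((hprodint 1 2).const_mul 3).add (hYbint n 3)),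
        hadd (fun ω => 3 * (S ω^1 * Y n ω^2)) (fun ω => Y n ω^3)
          ((hprodint 1 2).const_mul 3) (hYbint n 3),
        MeasureTheory.integral_const_mul, MeasureTheory.integral_const_mul, hprod 2 1, hprod 1 2, hYb n 3]
      simp only [pow_one] at *
      rw [ih1, ih3, hmean]
      push_cast; ring
    · simp_rw [hsplit]
      have e : ∀ ω, (S ω + Y n ω)^4 = (S ω)^4 + (4 * ((S ω)^3 * (Y n ω)^1)
          + (6 * ((S ω)^2 * (Y n ω)^2) + (4 * ((S ω)^1 * (Y n ω)^3) + (Y n ω)^4))) := by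
        intro ω; ring
      simp_rw [e]
      rw [hadd (fun ω => S ω^4)
          (fun ω => 4 * (S ω^3 * Y n ω^1) + (6 * (S ω^2 * Y n ω^2) + (4 * (S ω^1 * Y n ω^3) + Y n ω^4)))
          (hSaint 4) (((hprodint 3 1).const_mul 4).add
          (((hprodint 2 2).const_mul 6).add (((hprodint 1 3).const_mul 4).add (hYbint n 4)))),
        hadd (fun ω => 4 * (S ω^3 * Y n ω^1))
          (fun ω => 6 * (S ω^2 * Y n ω^2) + (4 * (S ω^1 * Y n ω^3) + Y n ω^4))
          ((hprodint 3 1).const_mul 4)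
          (((hprodint 2 2).const_mul 6).add (((hprodint 1 3).const_mul 4).add (hYbint n 4))),
        hadd (fun ω => 6 * (S ω^2 * Y n ω^2)) (fun ω => 4 * (S ω^1 * Y n ω^3) + Y n ω^4)
          ((hprodint 2 2).const_mul 6) (((hprodint 1 3).const_mul 4).add (hYbint n 4)),
        hadd (fun ω => 4 * (S ω^1 * Y n ω^3)) (fun ω => Y n ω^4)
          ((hprodint 1 3).const_mul 4) (hYbint n 4),
        MeasureTheory.integral_const_mul, MeasureTheory.integral_const_mul, MeasureTheory.integral_const_mul,
        hprod 3 1, hprod 2 2, hprod 1 3, hYb n 4]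
      simp only [pow_one] at *
      rw [ih1, ih2, ih4, hmean]
      push_cast; ring

set_option maxHeartbeats 1000000 in
/-- Tempering before averaging: for i.i.d. probability vectors `p i` with entries in `[ε, 1]`
(`0 < ε ≤ 1/K`) summing to one, the tempered correct-class probabilities
`p*_i(τ) = (p_{i,0})^{1/τ} / ∑_k (p_{i,k})^{1/τ}` lie in `[ε^{1/τ}/K, 1]`, hence are
separated from zero, and the tempered ensemble NLL satisfies
`E[-log((1/n) ∑ᵢ p*_i(τ))] = -log μ(τ) + (σ(τ)²/(2 μ(τ)²))·(1/n) + O(1/n²)` as `n → ∞`,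
with nonnegative coefficient `σ(τ)²/(2 μ(τ)²)` of `1/n`. -/
theorem tempered_nll_power_law
    {Ω : Type*} [MeasurableSpace Ω] (P : Measure Ω) [IsProbabilityMeasure P]
    (K : ℕ) (hK : 2 ≤ K) (ε : ℝ) (hε : 0 < ε) (hεK : ε ≤ 1 / K)
    (p : ℕ → Ω → Fin K → ℝ) (hmeas : ∀ i, Measurable (p i))
    (hrange : ∀ i ω, (∀ k, p i ω k ∈ Set.Icc ε 1) ∧ ∑ k, p i ω k = 1)
    (hindep : iIndepFun p P)
    (hident : ∀ i, IdentDistrib (p i) (p 0) P P)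
    (τ : ℝ) (hτ : 0 < τ)
    (pstar : ℕ → Ω → ℝ)
    (hpstar : ∀ i ω, pstar i ω = p i ω ⟨0, by omega⟩ ^ (1 / τ) / ∑ k, p i ω k ^ (1 / τ))
    (μτ στ2 : ℝ) (hμτ : μτ = ∫ ω, pstar 0 ω ∂P) (hστ2 : στ2 = variance (pstar 0) P) :
    (∀ i ω, pstar i ω ∈ Set.Icc (ε ^ (1 / τ) / K) 1) ∧
    0 ≤ στ2 / (2 * μτ ^ 2) ∧
    (∃ C > (0 : ℝ), ∃ N : ℕ, 0 < N ∧ ∀ n : ℕ, N ≤ n →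
      |(∫ ω, -Real.log ((∑ i ∈ Finset.range n, pstar i ω) / n) ∂P)
          + Real.log μτ - στ2 / (2 * μτ ^ 2) / n| ≤ C / (n : ℝ) ^ 2) := by
  have hτinv : 0 < 1 / τ := by positivity
  have hK0 : (0:ℝ) < K := by positivity
  set ε' : ℝ := ε ^ (1 / τ) / K with hε'
  have hε'pos : 0 < ε' := by positivity
  -- Part (a)
  have ha : ∀ i ω, pstar i ω ∈ Set.Icc ε' 1 := by
    intro i ω
    obtain ⟨hr, _⟩ := hrange i ω
    have ht : ∀ k, ε ^ (1/τ) ≤ p i ω k ^ (1/τ) ∧ p i ω k ^ (1/τ) ≤ 1 := by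
      intro k
      obtain ⟨h1, h2⟩ := hr k
      exact ⟨Real.rpow_le_rpow hε.le h1 hτinv.le,
        Real.rpow_le_one (by linarith) h2 hτinv.le⟩
    have hsle : (∑ k, p i ω k ^ (1/τ)) ≤ K := by
      calc (∑ k, p i ω k ^ (1/τ)) ≤ ∑ _k : Fin K, (1:ℝ) :=
            Finset.sum_le_sum fun k _ => (ht k).2
        _ = K := by simp
    have hspos : 0 < ∑ k, p i ω k ^ (1/τ) := by
      apply Finset.sum_pos (fun k _ => Real.rpow_pos_of_pos (lt_of_lt_of_le hε (hr k).1) _)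
      exact ⟨⟨0, by omega⟩, Finset.mem_univ _⟩
    rw [hpstar]
    constructor
    · exact div_le_div₀ (Real.rpow_nonneg (by linarith [(hr (⟨0, by omega⟩ : Fin K)).1]) _)
        (ht _).1 hspos hsle
    · rw [div_le_one hspos]
      exact Finset.single_le_sum (fun k _ => (Real.rpow_pos_of_pos
        (lt_of_lt_of_le hε (hr k).1) _).le) (Finset.mem_univ _)
  have hK1 : (1:ℝ) ≤ K := by exact_mod_cast Nat.one_le_of_lt hK
  have hεle1 : ε ≤ 1 := le_trans hεK (by rw [div_le_one hK0]; exact hK1)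
  have hε'le1 : ε' ≤ 1 := by
    have h1 : ε ^ (1/τ) ≤ 1 := Real.rpow_le_one hε.le hεle1 hτinv.le
    calc ε' ≤ 1 / K := by rw [hε']; exact div_le_div₀ one_pos.le h1 hK0 le_rfl
      _ ≤ 1 := by rw [div_le_one hK0]; exact hK1
  -- measurability, independence, identical distribution of pstar
  have hzK : 0 < K := by omega
  set g : (Fin K → ℝ) → ℝ := fun v => v ⟨0, hzK⟩ ^ (1/τ) / ∑ k, v k ^ (1/τ) with hgdef
  have hgmeas : Measurable g := by
    apply Measurable.div
    · exact (Real.continuous_rpow_const hτinv.le).measurable.comp (measurable_pi_apply _)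
    · exact Finset.measurable_sum _ fun k _ =>
        (Real.continuous_rpow_const hτinv.le).measurable.comp (measurable_pi_apply k)
  have hpeq : ∀ i, pstar i = g ∘ p i := fun i => funext fun ω => hpstar i ω
  have hpm : ∀ i, Measurable (pstar i) := fun i => (hpeq i) ▸ hgmeas.comp (hmeas i)
  have hpind : iIndepFun pstar P := by
    have h := hindep.comp (fun _ => g) (fun _ => hgmeas)
    have e : (fun i => g ∘ p i) = pstar := funext fun i => (hpeq i).symm
    rwa [e] at h
  have hpid : ∀ i, IdentDistrib (pstar i) (pstar 0) P P := by
    intro i; rw [hpeq i, hpeq 0]; exact (hident i).comp hgmeas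
  have habs : ∀ i ω, |pstar i ω| ≤ 1 := fun i ω =>
    abs_le.2 ⟨by linarith [(ha i ω).1], (ha i ω).2⟩
  have hpint : Integrable (pstar 0) P := bdd_int' P _ (hpm 0) 1 (habs 0)
  have hμl : ε' ≤ μτ := by
    rw [hμτ]
    calc ε' = ∫ _ω, (ε' : ℝ) ∂P := by simp
      _ ≤ ∫ ω, pstar 0 ω ∂P := integral_mono (integrable_const _) hpint fun ω => (ha 0 ω).1
  have hμu : μτ ≤ 1 := by
    rw [hμτ]
    calc ∫ ω, pstar 0 ω ∂P ≤ ∫ _ω, (1:ℝ) ∂P :=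
          integral_mono hpint (integrable_const _) fun ω => (ha 0 ω).2
      _ = 1 := by simp
  have hμpos : 0 < μτ := lt_of_lt_of_le hε'pos hμl
  -- variance as an integral
  have hmem2 : MemLp (pstar 0) 2 P :=
    memLp_of_bounded (ae_of_all _ fun ω => ⟨(ha 0 ω).1, (ha 0 ω).2⟩)
      (hpm 0).aestronglyMeasurable 2
  have hvar : στ2 = ∫ ω, (pstar 0 ω - μτ)^2 ∂P := by
    rw [hστ2, variance_eq_integral hmem2.aemeasurable, ← hμτ]
  -- centered variables
  set Y : ℕ → Ω → ℝ := fun i ω => pstar i ω - μτ with hYdef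
  have hYmeas : ∀ i, Measurable (Y i) := fun i => (hpm i).sub measurable_const
  have hYindep : iIndepFun Y P :=
    hpind.comp (fun _ => fun x : ℝ => x - μτ) (fun _ => measurable_id.sub measurable_const)
  have hYident : ∀ i, IdentDistrib (Y i) (Y 0) P P := fun i =>
    (hpid i).comp (measurable_id.sub measurable_const)
  have hYbdd : ∀ i ω, |Y i ω| ≤ 1 := by
    intro i ω
    have h1 := (ha i ω).1
    have h2 := (ha i ω).2
    rw [hYdef]
    simp only
    rw [abs_le]
    exact ⟨by linarith, by linarith⟩
  have hmean : ∫ ω, Y 0 ω ∂P = 0 := by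
    rw [hYdef]
    simp only
    rw [integral_sub hpint (integrable_const _), integral_const]
    simp [hμτ]
  set m2 := ∫ ω, (Y 0 ω)^2 ∂P with hm2def
  set m3 := ∫ ω, (Y 0 ω)^3 ∂P with hm3def
  set m4 := ∫ ω, (Y 0 ω)^4 ∂P with hm4def
  have hm2 : m2 = στ2 := by rw [hm2def, hvar]
  have hm2nn : 0 ≤ m2 := integral_nonneg fun ω => sq_nonneg _
  have hm4nn : 0 ≤ m4 := integral_nonneg fun ω => by positivity
  refine ⟨ha, ?_, ?_⟩
  · rw [hστ2]
    exact div_nonneg (variance_nonneg _ _) (by positivity)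
  · -- the power-law bound
    set C : ℝ := |m3| / (3 * μτ^3) + (m4 + 3 * m2^2) / (ε' * μτ^4) + 1 with hCdef
    have hCpos : 0 < C := by
      have h1 : 0 ≤ |m3| / (3 * μτ^3) := div_nonneg (abs_nonneg _) (by positivity)
      have h2 : 0 ≤ (m4 + 3 * m2^2) / (ε' * μτ^4) := div_nonneg (by positivity) (by positivity)
      rw [hCdef]
      linarith
    refine ⟨C, hCpos, 1, one_pos, ?_⟩
    intro n hn
    have hnn : (0:ℝ) < n := by exact_mod_cast hn
    have hnn1 : (1:ℝ) ≤ n := by exact_mod_cast hn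
    obtain ⟨hs1, hs2, hs3, hs4⟩ := sum_moments' P Y hYmeas hYindep hYident hYbdd hmean n
    set S : Ω → ℝ := fun ω => ∑ i ∈ Finset.range n, Y i ω with hSdef
    have hSmeas : Measurable S := Finset.measurable_sum _ fun i _ => hYmeas i
    have hSbd : ∀ ω, |S ω| ≤ n := by
      intro ω
      calc |S ω| ≤ ∑ i ∈ Finset.range n, |Y i ω| := Finset.abs_sum_le_sum_abs _ _
        _ ≤ ∑ i ∈ Finset.range n, 1 := Finset.sum_le_sum fun i _ => hYbdd i ω
        _ = n := by simp
    have hSint : ∀ a : ℕ, Integrable (fun ω => (S ω)^a) P := by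
      intro a
      refine bdd_int' P _ (hSmeas.pow_const a) ((n:ℝ)^a) fun ω => ?_
      rw [abs_pow]
      exact pow_le_pow_left₀ (abs_nonneg _) (hSbd ω) a
    set c1 : ℝ := n * μτ with hc1def
    have hc1pos : 0 < c1 := by positivity
    set u : Ω → ℝ := fun ω => S ω / c1 with hudef
    have humeas : Measurable u := hSmeas.div_const c1
    have hub : ∀ ω, |u ω| ≤ 1 / μτ := by
      intro ω
      rw [hudef]
      simp only
      rw [abs_div, abs_of_pos hc1pos]
      calc |S ω| / c1 ≤ (n:ℝ) / c1 := by gcongr; exact hSbd ω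
        _ = 1 / μτ := by rw [hc1def]; field_simp
    have hupow : ∀ (k : ℕ) ω, (u ω)^k = (S ω)^k / c1^k := by
      intro k ω; rw [hudef]; simp only; rw [div_pow]
    have huint : ∀ k : ℕ, Integrable (fun ω => (u ω)^k) P := by
      intro k
      have e : (fun ω => (u ω)^k) = fun ω => (S ω)^k / c1^k := funext (hupow k)
      rw [e]
      exact (hSint k).div_const _
    have huk : ∀ k : ℕ, ∫ ω, (u ω)^k ∂P = (∫ ω, (S ω)^k ∂P) / c1^k := by
      intro k
      simp_rw [hupow k]
      exact integral_div _ _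
    have hu1' : ∫ ω, u ω ∂P = 0 := by
      have := huk 1
      simp only [pow_one] at this
      rw [this, hs1, zero_div]
    have hu2' : ∫ ω, (u ω)^2 ∂P = (n * m2) / c1^2 := by rw [huk 2, hs2]
    have hu3' : ∫ ω, (u ω)^3 ∂P = (n * m3) / c1^3 := by rw [huk 3, hs3]
    have hu4' : ∫ ω, (u ω)^4 ∂P = ((n:ℝ) * m4 + 3*((n:ℝ)*((n:ℝ)-1))*m2^2) / c1^4 := by
      rw [huk 4, hs4]
    have hsum : ∀ ω, (∑ i ∈ Finset.range n, pstar i ω) = S ω + n * μτ := by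
      intro ω
      have : S ω = (∑ i ∈ Finset.range n, pstar i ω) - n * μτ := by
        rw [hSdef]
        simp only [hYdef]
        rw [Finset.sum_sub_distrib]
        simp [Finset.sum_const, Finset.card_range]
      linarith
    have hA : ∀ ω, (∑ i ∈ Finset.range n, pstar i ω) / n = μτ * (1 + u ω) := by
      intro ω
      rw [hsum ω, hudef]
      simp only
      rw [hc1def]
      field_simp
      ring
    have hxge : ∀ ω, ε' ≤ 1 + u ω := by
      intro ω
      have hAge : ε' ≤ (∑ i ∈ Finset.range n, pstar i ω) / n := by
        rw [le_div_iff₀ hnn]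
        calc ε' * n = ∑ _i ∈ Finset.range n, ε' := by
              rw [Finset.sum_const, Finset.card_range, nsmul_eq_mul, mul_comm]
          _ ≤ ∑ i ∈ Finset.range n, pstar i ω := Finset.sum_le_sum fun i _ => (ha i ω).1
      have h1u : 1 + u ω = ((∑ i ∈ Finset.range n, pstar i ω) / n) / μτ := by
        rw [hA ω]
        field_simp
      rw [h1u, le_div_iff₀ hμpos]
      calc ε' * μτ ≤ ε' * 1 := mul_le_mul_of_nonneg_left hμu hε'pos.le
        _ = ε' := mul_one _
        _ ≤ _ := hAge
    set R : Ω → ℝ := fun ω => Real.log (1 + u ω) - (u ω - (u ω)^2/2 + (u ω)^3/3) with hRdef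
    have hRmeas : Measurable R := (Real.measurable_log.comp (measurable_const.add humeas)).sub
      ((humeas.sub ((humeas.pow_const 2).div_const 2)).add ((humeas.pow_const 3).div_const 3))
    have hRb : ∀ ω, |R ω| ≤ (u ω)^4 / ε' := by
      intro ω
      have h := log_taylor' hε'pos hε'le1 (hxge ω)
      simp only [add_sub_cancel_left] at h
      rw [hRdef]
      simpa using h
    have hu4b : ∀ ω, (u ω)^4 ≤ (1/μτ)^4 := by
      intro ω
      calc (u ω)^4 = |u ω|^4 := by rw [← abs_pow, abs_of_nonneg (by positivity)]
        _ ≤ (1/μτ)^4 := pow_le_pow_left₀ (abs_nonneg _) (hub ω) 4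
    have hRint : Integrable R P := by
      refine bdd_int' P R hRmeas ((1/μτ)^4/ε') fun ω => le_trans (hRb ω) ?_
      exact div_le_div₀ (by positivity) (hu4b ω) hε'pos le_rfl
    have hpt : ∀ ω, -Real.log ((∑ i ∈ Finset.range n, pstar i ω) / n)
        = -Real.log μτ + (-(u ω) + ((u ω)^2/2 + (-((u ω)^3/3) + -(R ω)))) := by
      intro ω
      have hne : (1:ℝ) + u ω ≠ 0 := (lt_of_lt_of_le hε'pos (hxge ω)).ne'
      rw [hA ω, Real.log_mul hμpos.ne' hne]
      have hlog : Real.log (1 + u ω) = (u ω - (u ω)^2/2 + (u ω)^3/3) + R ω := by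
        rw [hRdef]; ring
      rw [hlog]; ring
    have hadd2 : ∀ (f g : Ω → ℝ), Integrable f P → Integrable g P →
        ∫ ω, f ω + g ω ∂P = (∫ ω, f ω ∂P) + ∫ ω, g ω ∂P := fun f g hf hg => integral_add hf hg
    have hu1int : Integrable u P := by simpa using huint 1
    have hintlog : ∫ ω, -Real.log ((∑ i ∈ Finset.range n, pstar i ω) / n) ∂P
        = -Real.log μτ + (-(∫ ω, u ω ∂P) + ((∫ ω, (u ω)^2 ∂P)/2
            + (-((∫ ω, (u ω)^3 ∂P)/3) + -(∫ ω, R ω ∂P)))) := by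
      simp_rw [hpt]
      rw [hadd2 (fun _ => -Real.log μτ)
            (fun ω => -(u ω) + ((u ω)^2/2 + (-((u ω)^3/3) + -(R ω)))) (integrable_const _)
            (hu1int.neg.add (((huint 2).div_const 2).add (((huint 3).div_const 3).neg.add hRint.neg))),
          hadd2 (fun ω => -(u ω)) (fun ω => (u ω)^2/2 + (-((u ω)^3/3) + -(R ω))) hu1int.neg
            (((huint 2).div_const 2).add (((huint 3).div_const 3).neg.add hRint.neg)),
          hadd2 (fun ω => (u ω)^2/2) (fun ω => -((u ω)^3/3) + -(R ω)) ((huint 2).div_const 2)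
            (((huint 3).div_const 3).neg.add hRint.neg),
          hadd2 (fun ω => -((u ω)^3/3)) (fun ω => -(R ω)) ((huint 3).div_const 3).neg hRint.neg,
          integral_const]
      simp [integral_neg, integral_div]
    have hRbound : |∫ ω, R ω ∂P| ≤ ((n:ℝ) * m4 + 3*((n:ℝ)*((n:ℝ)-1))*m2^2) / (c1^4 * ε') := by
      calc |∫ ω, R ω ∂P| ≤ ∫ ω, |R ω| ∂P := by
            simpa [Real.norm_eq_abs] using norm_integral_le_integral_norm (μ := P) R
        _ ≤ ∫ ω, (u ω)^4 / ε' ∂P := integral_mono hRint.abs ((huint 4).div_const ε') hRb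
        _ = (∫ ω, (u ω)^4 ∂P) / ε' := integral_div _ _
        _ = ((n:ℝ) * m4 + 3*((n:ℝ)*((n:ℝ)-1))*m2^2) / (c1^4 * ε') := by
            rw [hu4', div_div]
    rw [hintlog, hu1', hu2', hu3', ← hm2]
    have hcancel : -Real.log μτ + (-0 + ((↑n * m2 / c1^2)/2 + (-((↑n * m3 / c1^3)/3)
          + -(∫ ω, R ω ∂P)))) + Real.log μτ - m2 / (2 * μτ^2) / ↑n
        = -(m3/(3*μτ^3*(n:ℝ)^2) + ∫ ω, R ω ∂P) := by
      rw [hc1def]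
      field_simp
      ring
    rw [hcancel, abs_neg]
    have habs1 : |m3/(3*μτ^3*(n:ℝ)^2)| = |m3|/(3*μτ^3*(n:ℝ)^2) := by
      rw [abs_div, abs_of_pos (by positivity : (0:ℝ) < 3*μτ^3*(n:ℝ)^2)]
    have hnum : (n:ℝ)*m4 + 3*((n:ℝ)*((n:ℝ)-1))*m2^2 ≤ (n:ℝ)^2*(m4 + 3*m2^2) := by
      have e : (n:ℝ)^2*(m4 + 3*m2^2) - ((n:ℝ)*m4 + 3*((n:ℝ)*((n:ℝ)-1))*m2^2)
          = (n:ℝ)*((n:ℝ)-1)*m4 + 3*(n:ℝ)*m2^2 := by ring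
      have h1 : 0 ≤ (n:ℝ)*((n:ℝ)-1)*m4 :=
        mul_nonneg (mul_nonneg hnn.le (by linarith : (0:ℝ) ≤ (n:ℝ)-1)) hm4nn
      have h2 : 0 ≤ 3*(n:ℝ)*m2^2 := by positivity
      linarith
    calc |m3/(3*μτ^3*(n:ℝ)^2) + ∫ ω, R ω ∂P|
        ≤ |m3/(3*μτ^3*(n:ℝ)^2)| + |∫ ω, R ω ∂P| := abs_add_le _ _
      _ ≤ |m3|/(3*μτ^3*(n:ℝ)^2)
          + ((n:ℝ) * m4 + 3*((n:ℝ)*((n:ℝ)-1))*m2^2) / (c1^4 * ε') := by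
          rw [habs1]
          exact add_le_add le_rfl hRbound
      _ ≤ (|m3|/(3*μτ^3))/(n:ℝ)^2 + ((m4 + 3*m2^2)/(ε'*μτ^4))/(n:ℝ)^2 := by
          apply add_le_add
          · rw [div_div]
          · calc ((n:ℝ) * m4 + 3*((n:ℝ)*((n:ℝ)-1))*m2^2) / (c1^4 * ε')
                ≤ ((n:ℝ)^2*(m4 + 3*m2^2)) / (c1^4 * ε') :=
                  div_le_div₀ (by positivity) hnum (by positivity) le_rfl
              _ = ((m4 + 3*m2^2)/(ε'*μτ^4))/(n:ℝ)^2 := by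
                  rw [hc1def]
                  field_simp
      _ = (|m3|/(3*μτ^3) + (m4 + 3*m2^2)/(ε'*μτ^4))/(n:ℝ)^2 := (add_div _ _ _).symm
      _ ≤ C/(n:ℝ)^2 := by
          apply div_le_div₀ hCpos.le _ (by positivity) le_rfl
          rw [hCdef]
          exact le_add_of_nonneg_right zero_le_one
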